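/- Let σ ≥ 1 and 0 < ϖ < 1, and fix ω_av ∈ ℝ. For every h ∈ B_ϖ^θ with θ ≥ 0, the function I⁺h belongs to B_{ϖ,0}^{θ+σ} and ‖I⁺h‖_{ϖ,θ+σ} ≤ ‖h‖_{ϖ,θ} / (1 − ϖ). -/

import Mathlib

open MeasureTheory
open scoped ENNReal

noncomputable section

instance : Fact (0 < 2 * Real.pi) := ⟨by positivity⟩

/-- The Fourier multiplier symbol `e^(−s|k|^σ − i s ω_av sgn k)` of the semigroup `e^(−sL)`. -/
def heatMul (σ ωav s : ℝ) (k : ℤ) : ℂ :=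
  Complex.exp (Complex.ofReal (-(s * (|k| : ℝ) ^ σ)) -
    Complex.I * Complex.ofReal (ωav * s * (Int.sign k : ℝ)))

/-- The norm `‖h‖_{ϖ,θ} = Σ_{k∈ℤ} (1 + |k|^θ) sup_{t∈[0,∞)} e^(ϖ t |k|) |ĥ(k, t)|`
of the space `B_ϖ^θ`, valued in `ℝ≥0∞`. -/
def wienerNorm (ϖ θ : ℝ) (h : ℝ → AddCircle (2 * Real.pi) → ℂ) : ℝ≥0∞ :=
  ∑' k : ℤ, ENNReal.ofReal (1 + (|k| : ℝ) ^ θ) *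
    ⨆ t : {t : ℝ // 0 ≤ t},
      ENNReal.ofReal (Real.exp (ϖ * (t : ℝ) * (|k| : ℝ)) * ‖fourierCoeff (h (t : ℝ)) k‖)

lemma norm_heatMul' (σ ωav s : ℝ) (k : ℤ) :
    ‖heatMul σ ωav s k‖ = Real.exp (-(s * (|k| : ℝ) ^ σ)) := by
  rw [heatMul, Complex.norm_exp]
  congr 1
  simp [Complex.sub_re, Complex.mul_re]

lemma exp_integral_le (a t : ℝ) (ha : 0 < a) (ht : 0 ≤ t) :
    ∫ τ in Set.Ioc (0:ℝ) t, Real.exp (a * τ) ≤ Real.exp (a * t) / a := by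
  rw [← intervalIntegral.integral_of_le ht]
  have hderiv : ∀ x ∈ Set.uIcc (0:ℝ) t,
      HasDerivAt (fun x => Real.exp (a * x) / a) (Real.exp (a * x)) x := by
    intro x _
    have h1 : HasDerivAt (fun x : ℝ => a * x) a x := by
      simpa using (hasDerivAt_id x).const_mul a
    have h2 := (h1.exp).div_const a
    rw [mul_div_cancel_right₀ _ ha.ne'] at h2
    exact h2
  rw [intervalIntegral.integral_eq_sub_of_hasDerivAt hderiv
    ((Real.continuous_exp.comp (continuous_const.mul continuous_id)).intervalIntegrable 0 t)]
  have h3 : (0:ℝ) < Real.exp (a * 0) / a := by positivity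
  linarith


/-- The operator bound for `I⁺h(·,t) = ∫₀ᵗ e^(−(t−τ)L) P₀ h(·,τ) dτ`: if `σ ≥ 1`, `0 < ϖ < 1`,
`θ ≥ 0` and `h ∈ B_ϖ^θ`, then any `G` whose Fourier coefficients are those of `I⁺h` (namely
`Ĝ(k,t) = ∫₀ᵗ e^(−(t−τ)|k|^σ − i(t−τ)ω_av sgn k) ĥ(k,τ) dτ` for `k ≠ 0`, and `Ĝ(0,t) = 0`)
lies in `B_{ϖ,0}^{θ+σ}` with `‖I⁺h‖_{ϖ,θ+σ} ≤ ‖h‖_{ϖ,θ} / (1 − ϖ)`. -/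
theorem stmt8 (σ ϖ θ ωav : ℝ) (hσ : 1 ≤ σ) (hϖ0 : 0 < ϖ) (hϖ1 : ϖ < 1) (hθ : 0 ≤ θ)
    (h G : ℝ → AddCircle (2 * Real.pi) → ℂ)
    (hint : ∀ t : ℝ, 0 ≤ t → Integrable (h t) volume)
    (hhW : wienerNorm ϖ θ h ≠ ⊤)
    (hG : ∀ t : ℝ, 0 ≤ t → ∀ k : ℤ,
      fourierCoeff (G t) k =
        if k = 0 then 0 else
          ∫ τ in (0 : ℝ)..t, heatMul σ ωav (t - τ) k * fourierCoeff (h τ) k) :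
    wienerNorm ϖ (θ + σ) G ≤ wienerNorm ϖ θ h / ENNReal.ofReal (1 - ϖ) := by
  have h1ϖ : (0:ℝ) < 1 - ϖ := by linarith
  rw [wienerNorm, wienerNorm, div_eq_mul_inv, ← ENNReal.tsum_mul_right]
  refine ENNReal.tsum_le_tsum fun k => ?_
  by_cases hk : k = 0
  · subst hk
    have hz : ∀ t : {t : ℝ // 0 ≤ t},
        ENNReal.ofReal (Real.exp (ϖ * (t : ℝ) * (|(0:ℤ)| : ℝ)) *
          ‖fourierCoeff (G (t : ℝ)) (0:ℤ)‖) = 0 := by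
      intro t
      rw [hG t t.2 0, if_pos rfl]
      simp
    simp only [hz]
    simp
  · set n : ℝ := |(k : ℝ)| with hn_def
    have hn : (1:ℝ) ≤ n := by
      have h1 : (1:ℤ) ≤ |k| := Int.one_le_abs (by simpa using hk)
      rw [hn_def]
      exact_mod_cast h1
    have hn0 : (0:ℝ) < n := lt_of_lt_of_le one_pos hn
    have hnσ : (1:ℝ) ≤ n ^ σ := Real.one_le_rpow hn (by linarith)
    have hnσ0 : (0:ℝ) < n ^ σ := lt_of_lt_of_le one_pos hnσ
    have hnle : n ≤ n ^ σ := by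
      calc n = n ^ (1:ℝ) := (Real.rpow_one n).symm
        _ ≤ n ^ σ := Real.rpow_le_rpow_of_exponent_le hn hσ
    set S : ℝ≥0∞ := ⨆ t : {t : ℝ // 0 ≤ t},
      ENNReal.ofReal (Real.exp (ϖ * (t : ℝ) * n) * ‖fourierCoeff (h (t : ℝ)) k‖)
      with hS_def
    by_cases hS : S = ⊤
    · rw [hS]
      have hne : ENNReal.ofReal (1 + n ^ θ) ≠ 0 := by
        refine (ENNReal.ofReal_pos.mpr ?_).ne'
        have := Real.rpow_nonneg hn0.le θ
        linarith
      rw [ENNReal.mul_top hne, ENNReal.top_mul (by simp [ENNReal.inv_ne_zero])]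
      exact le_top
    · set M : ℝ := S.toReal with hM_def
      have hM0 : 0 ≤ M := ENNReal.toReal_nonneg
      have hSM : S = ENNReal.ofReal M := (ENNReal.ofReal_toReal hS).symm
      -- coefficient decay of h
      have hcoef : ∀ τ : ℝ, 0 ≤ τ →
          ‖fourierCoeff (h τ) k‖ ≤ M * Real.exp (-(ϖ * τ * n)) := by
        intro τ hτ
        have h1 : ENNReal.ofReal (Real.exp (ϖ * τ * n) * ‖fourierCoeff (h τ) k‖)
            ≤ S := by
          rw [hS_def]
          exact le_iSup (fun t : {t : ℝ // 0 ≤ t} =>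
            ENNReal.ofReal (Real.exp (ϖ * (t : ℝ) * n) *
              ‖fourierCoeff (h (t : ℝ)) k‖)) ⟨τ, hτ⟩
        rw [hSM] at h1
        have h2 : Real.exp (ϖ * τ * n) * ‖fourierCoeff (h τ) k‖ ≤ M :=
          (ENNReal.ofReal_le_ofReal_iff hM0).mp h1
        have h3 := Real.exp_pos (ϖ * τ * n)
        rw [Real.exp_neg, ← div_eq_mul_inv, le_div_iff₀ h3, mul_comm]
        exact h2
      set a : ℝ := n ^ σ - ϖ * n with ha_def
      have ha0 : 0 < a := by rw [ha_def]; nlinarith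
      have haσ : (1 - ϖ) * n ^ σ ≤ a := by rw [ha_def]; nlinarith
      -- key pointwise bound
      have key : ∀ t : ℝ, 0 ≤ t →
          Real.exp (ϖ * t * n) * ‖fourierCoeff (G t) k‖ ≤ M / ((1 - ϖ) * n ^ σ) := by
        intro t ht
        set C : ℝ := Real.exp (-(a * t) - ϖ * t * n) * M with hC_def
        have hC0 : 0 ≤ C := by rw [hC_def]; positivity
        have hGb : ‖fourierCoeff (G t) k‖ ≤ C * (Real.exp (a * t) / a) := by
          rw [hG t ht k, if_neg hk, intervalIntegral.integral_of_le ht]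
          calc ‖∫ τ in Set.Ioc (0:ℝ) t, heatMul σ ωav (t - τ) k * fourierCoeff (h τ) k‖
              ≤ ∫ τ in Set.Ioc (0:ℝ) t, ‖heatMul σ ωav (t - τ) k * fourierCoeff (h τ) k‖ :=
                norm_integral_le_integral_norm _
            _ ≤ ∫ τ in Set.Ioc (0:ℝ) t, C * Real.exp (a * τ) := by
                apply integral_mono_of_nonneg
                · exact Filter.Eventually.of_forall fun τ => norm_nonneg _
                · exact (continuous_const.mul (Real.continuous_exp.comp
                    (continuous_const.mul continuous_id))).integrableOn_Ioc
                · filter_upwards [ae_restrict_mem measurableSet_Ioc] with τ hτ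
                  rw [norm_mul, norm_heatMul']
                  have hb := hcoef τ hτ.1.le
                  have hexp : Real.exp (-((t - τ) * n ^ σ)) * (M * Real.exp (-(ϖ * τ * n)))
                      = C * Real.exp (a * τ) := by
                    rw [hC_def,
                      show Real.exp (-((t - τ) * n ^ σ)) * (M * Real.exp (-(ϖ * τ * n)))
                        = M * (Real.exp (-((t - τ) * n ^ σ)) * Real.exp (-(ϖ * τ * n))) by ring,
                      show Real.exp (-(a * t) - ϖ * t * n) * M * Real.exp (a * τ)
                        = M * (Real.exp (-(a * t) - ϖ * t * n) * Real.exp (a * τ)) by ring,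
                      ← Real.exp_add, ← Real.exp_add]
                    congr 2
                    rw [ha_def]
                    ring
                  rw [← hexp]
                  exact mul_le_mul_of_nonneg_left hb (Real.exp_nonneg _)
            _ = C * ∫ τ in Set.Ioc (0:ℝ) t, Real.exp (a * τ) := integral_const_mul C _
            _ ≤ C * (Real.exp (a * t) / a) :=
                mul_le_mul_of_nonneg_left (exp_integral_le a t ha0 ht) hC0
        have hone : Real.exp (ϖ * t * n) * Real.exp (-(a * t) - ϖ * t * n) * Real.exp (a * t)
            = 1 := by
          rw [← Real.exp_add, ← Real.exp_add, ← Real.exp_zero]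
          congr 1
          ring
        calc Real.exp (ϖ * t * n) * ‖fourierCoeff (G t) k‖
            ≤ Real.exp (ϖ * t * n) * (C * (Real.exp (a * t) / a)) :=
              mul_le_mul_of_nonneg_left hGb (Real.exp_nonneg _)
          _ = M * (Real.exp (ϖ * t * n) * Real.exp (-(a * t) - ϖ * t * n) * Real.exp (a * t)) / a := by
              rw [hC_def]; ring
          _ = M / a := by rw [hone, mul_one]
          _ ≤ M / ((1 - ϖ) * n ^ σ) :=
              div_le_div_of_nonneg_left hM0 (by positivity) haσ
      -- assemble
      have hsup : (⨆ t : {t : ℝ // 0 ≤ t},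
          ENNReal.ofReal (Real.exp (ϖ * (t : ℝ) * n) * ‖fourierCoeff (G (t : ℝ)) k‖))
          ≤ ENNReal.ofReal (M / ((1 - ϖ) * n ^ σ)) := by
        refine iSup_le fun t => ENNReal.ofReal_le_ofReal ?_
        exact key t t.2
      refine le_trans (mul_le_mul_right hsup _) ?_
      calc ENNReal.ofReal (1 + n ^ (θ + σ)) * ENNReal.ofReal (M / ((1 - ϖ) * n ^ σ))
          = ENNReal.ofReal ((1 + n ^ (θ + σ)) * (M / ((1 - ϖ) * n ^ σ))) := by
            rw [← ENNReal.ofReal_mul]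
            have := Real.rpow_nonneg hn0.le (θ + σ)
            linarith
        _ ≤ ENNReal.ofReal ((1 + n ^ θ) * M * (1 - ϖ)⁻¹) := by
            apply ENNReal.ofReal_le_ofReal
            have hsplit : n ^ (θ + σ) = n ^ θ * n ^ σ := Real.rpow_add hn0 θ σ
            have hθ0 : (0:ℝ) ≤ n ^ θ := Real.rpow_nonneg hn0.le θ
            have h1 : (1 + n ^ (θ + σ)) / n ^ σ ≤ 1 + n ^ θ := by
              rw [div_le_iff₀ hnσ0, hsplit]
              nlinarith
            have e1 : (1 + n ^ (θ + σ)) * (M / ((1 - ϖ) * n ^ σ))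
                = ((1 + n ^ (θ + σ)) / n ^ σ) * (M / (1 - ϖ)) := by
              rw [div_mul_div_comm, ← mul_div_assoc, mul_comm (n ^ σ) (1 - ϖ)]
            have e2 : (1 + n ^ θ) * M * (1 - ϖ)⁻¹ = (1 + n ^ θ) * (M / (1 - ϖ)) := by
              ring
            rw [e1, e2]
            exact mul_le_mul_of_nonneg_right h1 (by positivity)
        _ = ENNReal.ofReal (1 + n ^ θ) * S * (ENNReal.ofReal (1 - ϖ))⁻¹ := by
            rw [hSM, ← ENNReal.ofReal_inv_of_pos h1ϖ,
              ← ENNReal.ofReal_mul (by positivity), ← ENNReal.ofReal_mul (by positivity)]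


end
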